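/- Let n ≥ 3, 1 ≤ n₀ ≤ n-1, and let c₀, c₁ be reals. Define the symmetric n×n real matrix J by: for i ≠ j, J_{ij} = -c₀ if i and j lie both among the first n₀ indices or both among the last n-n₀ indices, and J_{ij} = -c₁ otherwise; and the diagonal entries are determined by requiring every row of J to sum to zero. Then the multiset of eigenvalues of J (with multiplicity) is: 0 with multiplicity 1, c₁·n with multiplicity 1, (c₀ - c₁)·n₀ + c₁·n with multiplicity n₀ - 1, and (c₁ - c₀)·n₀ + c₀·n with multiplicity n - n₀ - 1. -/

import Mathlib

open Matrix Polynomial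

set_option linter.unusedVariables false
set_option linter.unreachableTactic false
set_option linter.unusedTactic false
set_option linter.unnecessarySeqFocus false


-- similarity invariance of charpoly
lemma CGBS_charpoly_similar {n : Type*} [Fintype n] [DecidableEq n]
    (P D Q : Matrix n n ℝ) (h1 : Q * P = 1) :
    (P * D * Q).charpoly = D.charpoly := by
  have h2 : P * Q = 1 := mul_eq_one_comm.mp h1
  have hmap : (P * D * Q).map (C : ℝ →+* ℝ[X]) = P.map C * D.map C * Q.map C := by
    rw [Matrix.map_mul, Matrix.map_mul]
  have hPQ : P.map (C : ℝ →+* ℝ[X]) * Q.map C = 1 := by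
    rw [← Matrix.map_mul, h2, Matrix.map_one]; exact map_zero _; exact map_one _
  have hQP : Q.map (C : ℝ →+* ℝ[X]) * P.map C = 1 := mul_eq_one_comm.mp hPQ
  have key : charmatrix (P * D * Q) = P.map C * charmatrix D * Q.map C := by
    unfold charmatrix
    rw [RingHom.mapMatrix_apply, RingHom.mapMatrix_apply, hmap, mul_sub, sub_mul]
    congr 1
    have := (Matrix.scalar_commute (X : ℝ[X]) (fun r' => Commute.all _ _) (P.map C)).symm
    calc Matrix.scalar n (X : ℝ[X]) = P.map C * Q.map C * Matrix.scalar n X := by rw [hPQ, one_mul]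
      _ = P.map C * Matrix.scalar n X * Q.map C := by
          rw [mul_assoc, mul_assoc]
          congr 1
          exact (Matrix.scalar_commute (X : ℝ[X]) (fun r' => Commute.all _ _) (Q.map C)).symm
  unfold Matrix.charpoly
  rw [key, Matrix.det_mul, Matrix.det_mul]
  have : (P.map (C : ℝ →+* ℝ[X])).det * (Q.map C).det = 1 := by
    rw [← Matrix.det_mul, hPQ, Matrix.det_one]
  calc (P.map (C : ℝ →+* ℝ[X])).det * (charmatrix D).det * (Q.map C).det
      = (charmatrix D).det * ((P.map (C : ℝ →+* ℝ[X])).det * (Q.map C).det) := by ring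
    _ = (charmatrix D).det := by rw [this, mul_one]

lemma CGBS_charpoly_diagonal {n : Type*} [Fintype n] [DecidableEq n] (d : n → ℝ) :
    (Matrix.diagonal d).charpoly = ∏ i, (X - C (d i)) := by
  unfold Matrix.charpoly
  have : charmatrix (Matrix.diagonal d) = Matrix.diagonal (fun i => X - C (d i)) := by
    ext i j
    by_cases h : i = j
    · subst h; simp
    · simp [h, Matrix.diagonal_apply_ne _ h]
  rw [this, Matrix.det_diagonal]


lemma CGBS_sum_split (n n₀ : ℕ) (hn₀ : n₀ ≤ n) (x y : ℝ) :
    ∑ j : Fin n, (if j.val < n₀ then x else y) = n₀ * x + ((n : ℝ) - n₀) * y := by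
  rw [Fin.sum_univ_eq_sum_range (fun j => if j < n₀ then x else y) n]
  rw [Finset.range_eq_Ico, ← Finset.sum_Ico_consecutive _ (Nat.zero_le n₀) hn₀]
  have h1 : ∑ j ∈ Finset.Ico 0 n₀, (if j < n₀ then x else y) = n₀ * x := by
    rw [Finset.sum_congr rfl (fun j hj => if_pos (Finset.mem_Ico.mp hj).2)]
    simp [mul_comm]
  have h2 : ∑ j ∈ Finset.Ico n₀ n, (if j < n₀ then x else y) = ((n:ℝ) - n₀) * y := by
    rw [Finset.sum_congr rfl (fun j hj => if_neg (by have := (Finset.mem_Ico.mp hj).1; omega))]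
    rw [Finset.sum_const, Nat.card_Ico, nsmul_eq_mul, Nat.cast_sub hn₀]
  rw [h1, h2]

lemma CGBS_sum_eq (n n₀ : ℕ) (hn₀ : n₀ ≤ n) (x y u v w : ℝ) (a b c : ℕ)
    (ha : a < n) (hb : b < n) (hc : c < n) (f : Fin n → ℝ)
    (h : ∀ j : Fin n, f j = (if j.val < n₀ then x else y) + (if j.val = a then u else 0)
        + (if j.val = b then v else 0) + (if j.val = c then w else 0)) :
    ∑ j, f j = n₀ * x + ((n : ℝ) - n₀) * y + u + v + w := by
  have point : ∀ (t : ℕ), t < n → ∀ z : ℝ, ∑ j : Fin n, (if j.val = t then z else 0) = z := by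
    intro t ht z
    rw [Finset.sum_eq_single (⟨t, ht⟩ : Fin n)]
    · simp
    · intro j _ hj; exact if_neg (fun hv => hj (Fin.ext hv))
    · simp
  rw [Finset.sum_congr rfl (fun j _ => h j), Finset.sum_add_distrib, Finset.sum_add_distrib,
    Finset.sum_add_distrib, CGBS_sum_split n n₀ hn₀, point a ha, point b hb, point c hc]

/-- eigenvector matrix -/
def CGBS_P' (n n₀ : ℕ) : Matrix (Fin n) (Fin n) ℝ := fun i k =>
  if k.val = 0 then 1
  else if k.val = 1 then (if i.val < n₀ then (n₀ : ℝ) - n else (n₀ : ℝ))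
  else if k.val ≤ n₀ then (if i.val + 1 = k.val then 1 else 0) - (if i.val = 0 then 1 else 0)
  else (if i.val = k.val then 1 else 0) - (if i.val = n₀ then 1 else 0)

/-- inverse of eigenvector matrix -/
noncomputable def CGBS_Q' (n n₀ : ℕ) : Matrix (Fin n) (Fin n) ℝ := fun k i =>
  if k.val = 0 then 1 / n
  else if k.val = 1 then
    (if i.val < n₀ then -(1 / ((n : ℝ) * n₀)) else 1 / ((n : ℝ) * ((n : ℝ) - n₀)))
  else if k.val ≤ n₀ then
    (if i.val + 1 = k.val then 1 else 0) - (if i.val < n₀ then 1 / (n₀ : ℝ) else 0)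
  else (if i.val = k.val then 1 else 0) - (if i.val < n₀ then 0 else 1 / ((n : ℝ) - n₀))

/-- eigenvalues -/
noncomputable def CGBS_d' (n n₀ : ℕ) (c₀ c₁ : ℝ) : Fin n → ℝ := fun k =>
  if k.val = 0 then 0
  else if k.val = 1 then c₁ * n
  else if k.val ≤ n₀ then (c₀ - c₁) * n₀ + c₁ * n
  else (c₁ - c₀) * n₀ + c₀ * n

set_option maxHeartbeats 1600000 in
lemma CGBS_QP' (n n₀ : ℕ) (hn : 3 ≤ n) (h1 : 1 ≤ n₀) (h2 : n₀ + 1 ≤ n) :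
    CGBS_Q' n n₀ * CGBS_P' n n₀ = 1 := by
  have hN : (n : ℝ) ≠ 0 := Nat.cast_ne_zero.mpr (by omega)
  have hN0 : (n₀ : ℝ) ≠ 0 := Nat.cast_ne_zero.mpr (by omega)
  have hM : (n : ℝ) - n₀ ≠ 0 := by
    have : (n₀ : ℝ) < n := by exact_mod_cast (by omega : n₀ < n)
    linarith
  ext k l
  have hkn := k.isLt; have hln := l.isLt
  rw [Matrix.mul_apply, Matrix.one_apply]
  by_cases hk0 : k.val = 0
  · by_cases hl0 : l.val = 0
    · rw [if_pos (Fin.ext (by omega : k.val = l.val))]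
      refine (CGBS_sum_eq n n₀ (by omega) (1/(n:ℝ)) (1/(n:ℝ)) 0 0 0 0 0 0
        (by omega) (by omega) (by omega) _ ?_).trans ?_
      · intro j; simp only [CGBS_Q', CGBS_P']; split_ifs <;> first | omega | ring
      · field_simp <;> ring
    · rw [if_neg (Fin.ne_of_val_ne (by omega))]
      by_cases hl1 : l.val = 1
      · refine (CGBS_sum_eq n n₀ (by omega) (1/(n:ℝ) * ((n₀:ℝ) - n)) (1/(n:ℝ) * (n₀:ℝ))
          0 0 0 0 0 0 (by omega) (by omega) (by omega) _ ?_).trans ?_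
        · intro j; simp only [CGBS_Q', CGBS_P']; split_ifs <;> first | omega | ring
        · field_simp <;> ring
      · by_cases hl2 : l.val ≤ n₀
        · refine (CGBS_sum_eq n n₀ (by omega) 0 0 (1/(n:ℝ)) (-(1/(n:ℝ))) 0 (l.val - 1) 0 0
            (by omega) (by omega) (by omega) _ ?_).trans ?_
          · intro j; simp only [CGBS_Q', CGBS_P']; split_ifs <;> first | omega | ring
          · ring
        · refine (CGBS_sum_eq n n₀ (by omega) 0 0 (1/(n:ℝ)) (-(1/(n:ℝ))) 0 l.val n₀ 0
            (by omega) (by omega) (by omega) _ ?_).trans ?_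
          · intro j; simp only [CGBS_Q', CGBS_P']; split_ifs <;> first | omega | ring
          · ring
  · by_cases hk1 : k.val = 1
    · by_cases hl0 : l.val = 0
      · rw [if_neg (Fin.ne_of_val_ne (by omega))]
        refine (CGBS_sum_eq n n₀ (by omega) (-(1/((n:ℝ)*n₀))) (1/((n:ℝ)*((n:ℝ)-n₀)))
          0 0 0 0 0 0 (by omega) (by omega) (by omega) _ ?_).trans ?_
        · intro j; simp only [CGBS_Q', CGBS_P']; split_ifs <;> first | omega | ring
        · field_simp <;> ring
      · by_cases hl1 : l.val = 1
        · rw [if_pos (Fin.ext (by omega : k.val = l.val))]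
          refine (CGBS_sum_eq n n₀ (by omega) (-(1/((n:ℝ)*n₀)) * ((n₀:ℝ) - n))
            (1/((n:ℝ)*((n:ℝ)-n₀)) * (n₀:ℝ)) 0 0 0 0 0 0
            (by omega) (by omega) (by omega) _ ?_).trans ?_
          · intro j; simp only [CGBS_Q', CGBS_P']; split_ifs <;> first | omega | ring
          · field_simp <;> ring
        · rw [if_neg (Fin.ne_of_val_ne (by omega))]
          by_cases hl2 : l.val ≤ n₀
          · refine (CGBS_sum_eq n n₀ (by omega) 0 0 (-(1/((n:ℝ)*n₀))) (1/((n:ℝ)*n₀)) 0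
              (l.val - 1) 0 0 (by omega) (by omega) (by omega) _ ?_).trans ?_
            · intro j; simp only [CGBS_Q', CGBS_P']; split_ifs <;> first | omega | ring
            · ring
          · refine (CGBS_sum_eq n n₀ (by omega) 0 0 (1/((n:ℝ)*((n:ℝ)-n₀)))
              (-(1/((n:ℝ)*((n:ℝ)-n₀)))) 0 l.val n₀ 0
              (by omega) (by omega) (by omega) _ ?_).trans ?_
            · intro j; simp only [CGBS_Q', CGBS_P']; split_ifs <;> first | omega | ring
            · ring
    · by_cases hk2 : k.val ≤ n₀
      · -- k type 2
        by_cases hl0 : l.val = 0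
        · rw [if_neg (Fin.ne_of_val_ne (by omega))]
          refine (CGBS_sum_eq n n₀ (by omega) (-(1/(n₀:ℝ))) 0 1 0 0 (k.val - 1) 0 0
            (by omega) (by omega) (by omega) _ ?_).trans ?_
          · intro j; simp only [CGBS_Q', CGBS_P']; split_ifs <;> first | omega | ring
          · field_simp <;> ring
        · by_cases hl1 : l.val = 1
          · rw [if_neg (Fin.ne_of_val_ne (by omega))]
            refine (CGBS_sum_eq n n₀ (by omega) (-(1/(n₀:ℝ)) * ((n₀:ℝ) - n)) 0
              ((n₀:ℝ) - n) 0 0 (k.val - 1) 0 0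
              (by omega) (by omega) (by omega) _ ?_).trans ?_
            · intro j; simp only [CGBS_Q', CGBS_P']; split_ifs <;> first | omega | ring
            · field_simp <;> ring
          · by_cases hl2 : l.val ≤ n₀
            · by_cases hkl : k.val = l.val
              · rw [if_pos (Fin.ext hkl)]
                refine (CGBS_sum_eq n n₀ (by omega) 0 0 (1 - 1/(n₀:ℝ)) (1/(n₀:ℝ)) 0
                  (k.val - 1) 0 0 (by omega) (by omega) (by omega) _ ?_).trans ?_
                · intro j; simp only [CGBS_Q', CGBS_P']; split_ifs <;> first | omega | ring
                · ring
              · rw [if_neg (Fin.ne_of_val_ne hkl)]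
                refine (CGBS_sum_eq n n₀ (by omega) 0 0 (-(1/(n₀:ℝ))) (1/(n₀:ℝ)) 0
                  (l.val - 1) 0 0 (by omega) (by omega) (by omega) _ ?_).trans ?_
                · intro j; simp only [CGBS_Q', CGBS_P']; split_ifs <;> first | omega | ring
                · ring
            · rw [if_neg (Fin.ne_of_val_ne (by omega))]
              refine (CGBS_sum_eq n n₀ (by omega) 0 0 0 0 0 0 0 0
                (by omega) (by omega) (by omega) _ ?_).trans ?_
              · intro j; simp only [CGBS_Q', CGBS_P']; split_ifs <;> first | omega | ring
              · ring
      · -- k type 3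
        by_cases hl0 : l.val = 0
        · rw [if_neg (Fin.ne_of_val_ne (by omega))]
          refine (CGBS_sum_eq n n₀ (by omega) 0 (-(1/((n:ℝ)-n₀))) 1 0 0 k.val 0 0
            (by omega) (by omega) (by omega) _ ?_).trans ?_
          · intro j; simp only [CGBS_Q', CGBS_P']; split_ifs <;> first | omega | ring
          · field_simp <;> ring
        · by_cases hl1 : l.val = 1
          · rw [if_neg (Fin.ne_of_val_ne (by omega))]
            refine (CGBS_sum_eq n n₀ (by omega) 0 (-(1/((n:ℝ)-n₀)) * (n₀:ℝ)) (n₀:ℝ) 0 0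
              k.val 0 0 (by omega) (by omega) (by omega) _ ?_).trans ?_
            · intro j; simp only [CGBS_Q', CGBS_P']; split_ifs <;> first | omega | ring
            · field_simp <;> ring
          · by_cases hl2 : l.val ≤ n₀
            · rw [if_neg (Fin.ne_of_val_ne (by omega))]
              refine (CGBS_sum_eq n n₀ (by omega) 0 0 0 0 0 0 0 0
                (by omega) (by omega) (by omega) _ ?_).trans ?_
              · intro j; simp only [CGBS_Q', CGBS_P']; split_ifs <;> first | omega | ring
              · ring
            · by_cases hkl : k.val = l.val
              · rw [if_pos (Fin.ext hkl)]
                refine (CGBS_sum_eq n n₀ (by omega) 0 0 (1 - 1/((n:ℝ)-n₀)) (1/((n:ℝ)-n₀)) 0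
                  k.val n₀ 0 (by omega) (by omega) (by omega) _ ?_).trans ?_
                · intro j; simp only [CGBS_Q', CGBS_P']; split_ifs <;> first | omega | ring
                · ring
              · rw [if_neg (Fin.ne_of_val_ne hkl)]
                refine (CGBS_sum_eq n n₀ (by omega) 0 0 (-(1/((n:ℝ)-n₀))) (1/((n:ℝ)-n₀)) 0
                  l.val n₀ 0 (by omega) (by omega) (by omega) _ ?_).trans ?_
                · intro j; simp only [CGBS_Q', CGBS_P']; split_ifs <;> first | omega | ring
                · ring


lemma CGBS_rowsum_trick {n : ℕ} (J : Matrix (Fin n) (Fin n) ℝ) (i : Fin n)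
    (h : ∑ j, J i j = 0) (v : Fin n → ℝ) :
    ∑ j, J i j * v j = ∑ j, (if j.val = i.val then 0 else J i j * (v j - v i)) := by
  have h1 : ∑ j, J i j * v j = ∑ j, J i j * (v j - v i) + (∑ j, J i j) * v i := by
    rw [Finset.sum_mul, ← Finset.sum_add_distrib]
    exact Finset.sum_congr rfl (fun j _ => by ring)
  rw [h1, h, zero_mul, add_zero]
  refine Finset.sum_congr rfl (fun j _ => ?_)
  by_cases hj : j.val = i.val
  · rw [if_pos hj, Fin.ext hj, sub_self, mul_zero]
  · rw [if_neg hj]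


set_option maxHeartbeats 1600000 in
lemma CGBS_JP' (n n₀ : ℕ) (hn : 3 ≤ n) (h1 : 1 ≤ n₀) (h2 : n₀ + 1 ≤ n)
    (c₀ c₁ : ℝ) (J : Matrix (Fin n) (Fin n) ℝ)
    (hoff : ∀ i j : Fin n, i ≠ j →
      J i j = if (i.val < n₀ ∧ j.val < n₀) ∨ (n₀ ≤ i.val ∧ n₀ ≤ j.val)
        then -c₀ else -c₁)
    (hrow : ∀ i : Fin n, ∑ j, J i j = 0) :
    J * CGBS_P' n n₀ = CGBS_P' n n₀ * Matrix.diagonal (CGBS_d' n n₀ c₀ c₁) := by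
  ext i k
  have hkn := k.isLt; have hin := i.isLt
  rw [Matrix.mul_apply, Matrix.mul_diagonal,
    CGBS_rowsum_trick J i (hrow i) (fun j => CGBS_P' n n₀ j k)]
  have key : ∀ j : Fin n, ¬ j.val = i.val →
      J i j = if (i.val < n₀ ∧ j.val < n₀) ∨ (n₀ ≤ i.val ∧ n₀ ≤ j.val)
        then -c₀ else -c₁ :=
    fun j hj => hoff i j (Fin.ne_of_val_ne (fun h => hj h.symm))
  by_cases hk0 : k.val = 0
  · refine (CGBS_sum_eq n n₀ (by omega) 0 0 0 0 0 0 0 0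
      (by omega) (by omega) (by omega) _ ?_).trans ?_
    · intro j
      by_cases hji : j.val = i.val
      · rw [if_pos hji]; split_ifs <;> first | omega | ring
      · rw [if_neg hji, key j hji]; simp only [CGBS_P']
        split_ifs <;> first | omega | ring
    · simp only [CGBS_P', CGBS_d']; split_ifs <;> first | omega | ring
  · by_cases hk1 : k.val = 1
    · by_cases hiB : i.val < n₀
      · refine (CGBS_sum_eq n n₀ (by omega) 0 (-(c₁ * (n:ℝ))) 0 0 0 0 0 0
          (by omega) (by omega) (by omega) _ ?_).trans ?_
        · intro j
          by_cases hji : j.val = i.val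
          · rw [if_pos hji]; split_ifs <;> first | omega | ring
          · rw [if_neg hji, key j hji]; simp only [CGBS_P']
            split_ifs <;> first | omega | ring
        · simp only [CGBS_P', CGBS_d']; split_ifs <;> first | omega | ring
      · refine (CGBS_sum_eq n n₀ (by omega) (c₁ * (n:ℝ)) 0 0 0 0 0 0 0
          (by omega) (by omega) (by omega) _ ?_).trans ?_
        · intro j
          by_cases hji : j.val = i.val
          · rw [if_pos hji]; split_ifs <;> first | omega | ring
          · rw [if_neg hji, key j hji]; simp only [CGBS_P']
            split_ifs <;> first | omega | ring
        · simp only [CGBS_P', CGBS_d']; split_ifs <;> first | omega | ring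
    · by_cases hk2 : k.val ≤ n₀
      · by_cases hip : i.val + 1 = k.val
        · refine (CGBS_sum_eq n n₀ (by omega) c₀ c₁ c₀ (-c₀) 0 0 i.val 0
            (by omega) (by omega) (by omega) _ ?_).trans ?_
          · intro j
            by_cases hji : j.val = i.val
            · rw [if_pos hji]; split_ifs <;> first | omega | ring
            · rw [if_neg hji, key j hji]; simp only [CGBS_P']
              split_ifs <;> first | omega | ring
          · simp only [CGBS_P', CGBS_d']; split_ifs <;> first | omega | ring
        · by_cases hi0 : i.val = 0
          · refine (CGBS_sum_eq n n₀ (by omega) (-c₀) (-c₁) (-c₀) c₀ 0 (k.val - 1) 0 0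
              (by omega) (by omega) (by omega) _ ?_).trans ?_
            · intro j
              by_cases hji : j.val = i.val
              · rw [if_pos hji]; split_ifs <;> first | omega | ring
              · rw [if_neg hji, key j hji]; simp only [CGBS_P']
                split_ifs <;> first | omega | ring
            · simp only [CGBS_P', CGBS_d']; split_ifs <;> first | omega | ring
          · by_cases hiB : i.val < n₀
            · refine (CGBS_sum_eq n n₀ (by omega) 0 0 (-c₀) c₀ 0 (k.val - 1) 0 0
                (by omega) (by omega) (by omega) _ ?_).trans ?_
              · intro j
                by_cases hji : j.val = i.val
                · rw [if_pos hji]; split_ifs <;> first | omega | ring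
                · rw [if_neg hji, key j hji]; simp only [CGBS_P']
                  split_ifs <;> first | omega | ring
              · simp only [CGBS_P', CGBS_d']; split_ifs <;> first | omega | ring
            · refine (CGBS_sum_eq n n₀ (by omega) 0 0 (-c₁) c₁ 0 (k.val - 1) 0 0
                (by omega) (by omega) (by omega) _ ?_).trans ?_
              · intro j
                by_cases hji : j.val = i.val
                · rw [if_pos hji]; split_ifs <;> first | omega | ring
                · rw [if_neg hji, key j hji]; simp only [CGBS_P']
                  split_ifs <;> first | omega | ring
              · simp only [CGBS_P', CGBS_d']; split_ifs <;> first | omega | ring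
      · by_cases hiq : i.val = k.val
        · refine (CGBS_sum_eq n n₀ (by omega) c₁ c₀ c₀ (-c₀) 0 n₀ i.val 0
            (by omega) (by omega) (by omega) _ ?_).trans ?_
          · intro j
            by_cases hji : j.val = i.val
            · rw [if_pos hji]; split_ifs <;> first | omega | ring
            · rw [if_neg hji, key j hji]; simp only [CGBS_P']
              split_ifs <;> first | omega | ring
          · simp only [CGBS_P', CGBS_d']; split_ifs <;> first | omega | ring
        · by_cases hin0 : i.val = n₀
          · refine (CGBS_sum_eq n n₀ (by omega) (-c₁) (-c₀) (-c₀) c₀ 0 k.val n₀ 0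
              (by omega) (by omega) (by omega) _ ?_).trans ?_
            · intro j
              by_cases hji : j.val = i.val
              · rw [if_pos hji]; split_ifs <;> first | omega | ring
              · rw [if_neg hji, key j hji]; simp only [CGBS_P']
                split_ifs <;> first | omega | ring
            · simp only [CGBS_P', CGBS_d']; split_ifs <;> first | omega | ring
          · by_cases hiB : i.val < n₀
            · refine (CGBS_sum_eq n n₀ (by omega) 0 0 (-c₁) c₁ 0 k.val n₀ 0
                (by omega) (by omega) (by omega) _ ?_).trans ?_
              · intro j
                by_cases hji : j.val = i.val
                · rw [if_pos hji]; split_ifs <;> first | omega | ring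
                · rw [if_neg hji, key j hji]; simp only [CGBS_P']
                  split_ifs <;> first | omega | ring
              · simp only [CGBS_P', CGBS_d']; split_ifs <;> first | omega | ring
            · refine (CGBS_sum_eq n n₀ (by omega) 0 0 (-c₀) c₀ 0 k.val n₀ 0
                (by omega) (by omega) (by omega) _ ?_).trans ?_
              · intro j
                by_cases hji : j.val = i.val
                · rw [if_pos hji]; split_ifs <;> first | omega | ring
                · rw [if_neg hji, key j hji]; simp only [CGBS_P']
                  split_ifs <;> first | omega | ring
              · simp only [CGBS_P', CGBS_d']; split_ifs <;> first | omega | ring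

lemma CGBS_map_const_Ico (a b : ℕ) (f : ℕ → ℝ) (c : ℝ)
    (h : ∀ j, a ≤ j → j < b → f j = c) :
    (Finset.Ico a b).val.map f = Multiset.replicate (b - a) c := by
  rw [Multiset.eq_replicate]
  constructor
  · rw [Multiset.card_map]; exact Nat.card_Ico a b
  · intro x hx
    obtain ⟨j, hj, rfl⟩ := Multiset.mem_map.mp hx
    have := Finset.mem_Ico.mp (Finset.mem_val.mp hj)
    exact h j this.1 this.2

lemma CGBS_multiset (n n₀ : ℕ) (hn : 3 ≤ n) (h1 : 1 ≤ n₀) (h2 : n₀ + 1 ≤ n) (c₀ c₁ : ℝ) :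
    Finset.univ.val.map (CGBS_d' n n₀ c₀ c₁) =
      (0 : ℝ) ::ₘ (c₁ * n) ::ₘ
        (Multiset.replicate (n₀ - 1) ((c₀ - c₁) * n₀ + c₁ * n) +
         Multiset.replicate (n - n₀ - 1) ((c₁ - c₀) * n₀ + c₀ * n)) := by
  have hcomp : CGBS_d' n n₀ c₀ c₁ = (fun (j : ℕ) =>
      if j = 0 then (0:ℝ) else if j = 1 then c₁ * n
      else if j ≤ n₀ then (c₀ - c₁) * n₀ + c₁ * n
      else (c₁ - c₀) * n₀ + c₀ * n) ∘ Fin.val := rfl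
  rw [hcomp, ← Multiset.map_map]
  have huniv : (Finset.univ : Finset (Fin n)).val.map Fin.val = (Finset.range n).val := by
    have := Fin.map_valEmbedding_univ (n := n)
    rw [Nat.Iio_eq_range] at this
    rw [← this]
    rfl
  rw [huniv]
  set f : ℕ → ℝ := fun j =>
      if j = 0 then (0:ℝ) else if j = 1 then c₁ * n
      else if j ≤ n₀ then (c₀ - c₁) * n₀ + c₁ * n
      else (c₁ - c₀) * n₀ + c₀ * n with hf
  have hsplit : (Finset.range n).val =
      (Finset.Ico 0 2).val + (Finset.Ico 2 (n₀+1)).val + (Finset.Ico (n₀+1) n).val := by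
    rw [Finset.range_eq_Ico]
    have d1 : ((Finset.Ico 0 2).disjUnion (Finset.Ico 2 (n₀+1))
        (Finset.Ico_disjoint_Ico_consecutive 0 2 (n₀+1))).val
        = (Finset.Ico 0 2).val + (Finset.Ico 2 (n₀+1)).val := rfl
    have d2 : ((Finset.Ico 0 (n₀+1)).disjUnion (Finset.Ico (n₀+1) n)
        (Finset.Ico_disjoint_Ico_consecutive 0 (n₀+1) n)).val
        = (Finset.Ico 0 (n₀+1)).val + (Finset.Ico (n₀+1) n).val := rfl
    rw [← d1, Finset.disjUnion_eq_union, Finset.Ico_union_Ico_eq_Ico (by omega) (by omega)]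
    rw [← d2, Finset.disjUnion_eq_union, Finset.Ico_union_Ico_eq_Ico (by omega) (by omega)]
  rw [hsplit, Multiset.map_add, Multiset.map_add]
  have e1 : (Finset.Ico 0 2).val.map f = (0:ℝ) ::ₘ (c₁ * n) ::ₘ 0 := by
    have : Finset.Ico 0 2 = {0, 1} := by decide
    rw [this]
    simp [hf]
  have e2 : (Finset.Ico 2 (n₀+1)).val.map f =
      Multiset.replicate (n₀ - 1) ((c₀ - c₁) * n₀ + c₁ * n) := by
    rw [CGBS_map_const_Ico 2 (n₀+1) f _ (fun j hj hj' => by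
      simp only [hf]; rw [if_neg (by omega), if_neg (by omega), if_pos (by omega)])]
    congr 1
  have e3 : (Finset.Ico (n₀+1) n).val.map f =
      Multiset.replicate (n - n₀ - 1) ((c₁ - c₀) * n₀ + c₀ * n) := by
    rw [CGBS_map_const_Ico (n₀+1) n f _ (fun j hj hj' => by
      simp only [hf]; rw [if_neg (by omega), if_neg (by omega), if_neg (by omega)])]
    congr 1
  rw [e1, e2, e3]
  simp

lemma CGBS_roots_prod (m : Type*) [Fintype m] (f : m → ℝ) :
    (∏ i, (X - C (f i))).roots = Finset.univ.val.map f := by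
  rw [← Polynomial.roots_multiset_prod_X_sub_C (Finset.univ.val.map f)]
  congr 1
  rw [Multiset.map_map]
  rfl

/-- Exact spectrum of the block Jacobian on the complete graph Kₙ.
J has off-diagonal entries -c₀ within the first n₀ indices and within the last
n - n₀ indices, -c₁ across, and zero row sums. Its eigenvalues, with multiplicity,
are 0 (once), c₁n (once), (c₀-c₁)n₀ + c₁n (n₀ - 1 times) and
(c₁-c₀)n₀ + c₀n (n - n₀ - 1 times). -/
theorem complete_graph_block_spectrum (n n₀ : ℕ)
    (hn : 3 ≤ n) (hn₀ : 1 ≤ n₀) (hn₀' : n₀ ≤ n - 1)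
    (c₀ c₁ : ℝ)
    (J : Matrix (Fin n) (Fin n) ℝ)
    (hoff : ∀ i j : Fin n, i ≠ j →
      J i j = if (i.val < n₀ ∧ j.val < n₀) ∨ (n₀ ≤ i.val ∧ n₀ ≤ j.val)
        then -c₀ else -c₁)
    (hrow : ∀ i : Fin n, ∑ j, J i j = 0)
    (hJ : J.IsHermitian) :
    Finset.univ.val.map hJ.eigenvalues =
      (0 : ℝ) ::ₘ (c₁ * n) ::ₘ
        (Multiset.replicate (n₀ - 1) ((c₀ - c₁) * n₀ + c₁ * n) +
         Multiset.replicate (n - n₀ - 1) ((c₁ - c₀) * n₀ + c₀ * n)) := by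
  have h2 : n₀ + 1 ≤ n := by omega
  -- charpoly of J via explicit diagonalization
  have hQP := CGBS_QP' n n₀ hn hn₀ h2
  have hPQ : CGBS_P' n n₀ * CGBS_Q' n n₀ = 1 := mul_eq_one_comm.mp hQP
  have hJeq : J = CGBS_P' n n₀ * Matrix.diagonal (CGBS_d' n n₀ c₀ c₁) * CGBS_Q' n n₀ := by
    calc J = J * (CGBS_P' n n₀ * CGBS_Q' n n₀) := by rw [hPQ, mul_one]
      _ = (J * CGBS_P' n n₀) * CGBS_Q' n n₀ := by rw [mul_assoc]
      _ = _ := by rw [CGBS_JP' n n₀ hn hn₀ h2 c₀ c₁ J hoff hrow]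
  have hc1 : J.charpoly = (Matrix.diagonal (CGBS_d' n n₀ c₀ c₁)).charpoly := by
    rw [hJeq]; exact CGBS_charpoly_similar _ _ _ hQP
  -- charpoly of J via the spectral theorem
  set U : Matrix (Fin n) (Fin n) ℝ :=
    (Matrix.IsHermitian.eigenvectorUnitary hJ : Matrix (Fin n) (Fin n) ℝ) with hUdef
  have hUmem := (Matrix.IsHermitian.eigenvectorUnitary hJ).2
  rw [Matrix.mem_unitaryGroup_iff] at hUmem
  have hUU : star U * U = 1 := mul_eq_one_comm.mp hUmem
  have hofr : (RCLike.ofReal ∘ hJ.eigenvalues : Fin n → ℝ) = hJ.eigenvalues := rfl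
  have hc2 : J.charpoly = (Matrix.diagonal hJ.eigenvalues).charpoly := by
    conv_lhs => rw [hJ.spectral_theorem]
    rw [hofr]
    exact CGBS_charpoly_similar U _ (star U) hUU
  have hroots : Finset.univ.val.map hJ.eigenvalues = Finset.univ.val.map (CGBS_d' n n₀ c₀ c₁) := by
    rw [← CGBS_roots_prod (Fin n) hJ.eigenvalues, ← CGBS_roots_prod (Fin n) (CGBS_d' n n₀ c₀ c₁),
      ← CGBS_charpoly_diagonal, ← CGBS_charpoly_diagonal, ← hc1, ← hc2]
  rw [hroots, CGBS_multiset n n₀ hn hn₀ h2 c₀ c₁]
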